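/- arXiv:1501.03020 — 2 statements merged into one kernel-verified Lean document; each statement's English description precedes it below -/
import Mathlib

section
/- Fix an integer d ≥ 1, T > 0, and functions b, σ : {1,…,d} × ℝ → ℝ satisfying |b(i,x)−b(i,y)| + |σ(i,x)−σ(i,y)| ≤ K|x−y| for some K > 0 and all i, x, y. Fix φ ∈ ℍ_T and a step function λ : [0,T] → ℝ of the form λ(t) = λ₀·1_{{0}}(t) + Σ_{j=0}^k λ_j·1_{(t_j, t_{j+1}]}(t) for a partition 0 = t₀ < t₁ < … < t_{k+1} = T and real numbers λ₀,…,λ_k. Then the map ν ↦ ∫₀ᵀ λ(s) φ'(s) ds − ∫₀ᵀ λ(s) b̂(ν, φ(s))(s) ds − ∫₀ᵀ (λ(s)²/2) σ̂²(ν, φ(s))(s) ds is continuous from (𝕄_T, d_T) to ℝ. -/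
set_option maxHeartbeats 1000000

open MeasureTheory Set

lemma key_est (T : ℝ) (hT : 0 < T) (a cc : ℝ) (ha : 0 ≤ a) (hac : a ≤ cc) (hcT : cc ≤ T)
    (h : ℝ → ℝ) (hh : ContinuousOn h (Set.Icc 0 T)) (ε : ℝ) (hε : 0 < ε) :
    ∃ δ : ℝ, 0 < δ ∧ ∀ K K' : ℝ → ℝ, Measurable K → Measurable K' →
      (∀ s ∈ Set.Icc (0:ℝ) T, K s ∈ Set.Icc (0:ℝ) 1) →
      (∀ s ∈ Set.Icc (0:ℝ) T, K' s ∈ Set.Icc (0:ℝ) 1) →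
      (∀ t ∈ Set.Icc (0:ℝ) T, |(∫ s in Set.Ioc (0:ℝ) t, K' s) - ∫ s in Set.Ioc (0:ℝ) t, K s| ≤ δ) →
      |∫ s in Set.Ioc a cc, h s * (K' s - K s)| ≤ ε := by
  -- bound for h
  obtain ⟨M0, hM0⟩ := isCompact_Icc.exists_bound_of_continuousOn hh
  set M : ℝ := max M0 0 with hMdef
  have hMnn : 0 ≤ M := le_max_right _ _
  have hM : ∀ x ∈ Set.Icc (0:ℝ) T, |h x| ≤ M := fun x hx => (hM0 x hx).trans (le_max_left _ _)
  -- uniform continuity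
  set ε₁ : ℝ := ε / (2 * (T + 1)) with hε₁def
  have hε₁ : 0 < ε₁ := by positivity
  have huc := (isCompact_Icc (a := (0:ℝ)) (b := T)).uniformContinuousOn_of_continuous hh
  rw [Metric.uniformContinuousOn_iff_le] at huc
  obtain ⟨η, hη, hmod⟩ := huc ε₁ hε₁
  set n : ℕ := ⌈(cc - a) / η⌉₊ + 1 with hndef
  have hnpos : 0 < (n : ℝ) := by positivity
  have hlen : 0 ≤ (cc - a) / n := by
    apply div_nonneg (by linarith) hnpos.le
  have hstep : (cc - a) / n ≤ η := by
    rw [div_le_iff₀ hnpos]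
    have h1 : (cc - a) / η ≤ (n : ℝ) := by
      calc (cc - a) / η ≤ (⌈(cc - a) / η⌉₊ : ℝ) := Nat.le_ceil _
        _ ≤ (n : ℝ) := by exact_mod_cast Nat.le_succ _
    have : cc - a = ((cc - a) / η) * η := by field_simp
    nlinarith
  refine ⟨ε / (4 * n * (M + 1)), by positivity, ?_⟩
  intro K K' hKm hK'm hKb hK'b hsup
  set Δ : ℝ → ℝ := fun s => K' s - K s with hΔdef
  have hΔbd : ∀ s ∈ Set.Icc (0:ℝ) T, |Δ s| ≤ 1 := by
    intro s hs
    have h1 := hKb s hs; have h2 := hK'b s hs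
    simp only [Set.mem_Icc] at h1 h2
    rw [abs_le]; constructor <;> simp only [hΔdef] <;> linarith [h1.1, h1.2, h2.1, h2.2]
  have hΔm : Measurable Δ := hK'm.sub hKm
  -- integrability facts
  have hΔint : IntegrableOn Δ (Set.Icc 0 T) := by
    have := (integrable_const (1:ℝ) (μ := volume.restrict (Set.Icc (0:ℝ) T))).bdd_mul
      (c := 1) hΔm.aestronglyMeasurable.restrict
      ((ae_restrict_iff' measurableSet_Icc).2 (ae_of_all _ (fun s hs => by
        simpa using hΔbd s hs)))
    exact this.congr (ae_of_all _ fun s => mul_one _)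
  have hHint : IntegrableOn h (Set.Icc 0 T) := hh.integrableOn_Icc
  have hHΔint : IntegrableOn (fun s => h s * Δ s) (Set.Icc 0 T) := by
    have := hΔint.bdd_mul (c := M) (hh.aemeasurable measurableSet_Icc).aestronglyMeasurable
      ((ae_restrict_iff' measurableSet_Icc).2 (ae_of_all _ (fun s hs => by
        simpa using hM s hs)))
    exact this
  -- the partition
  set p : ℕ → ℝ := fun j => a + j * ((cc - a) / n) with hpdef
  have hpmono : Monotone p := by
    intro i j hij
    simp only [hpdef]
    have : (i:ℝ) ≤ j := by exact_mod_cast hij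
    nlinarith
  have hp0 : p 0 = a := by simp [hpdef]
  have hpn : p n = cc := by
    simp only [hpdef]
    field_simp
    ring
  have hpIcc : ∀ j ≤ n, p j ∈ Set.Icc (0:ℝ) T := by
    intro j hj
    constructor
    · have : a ≤ p j := by simp only [hpdef]; nlinarith [Nat.cast_nonneg (α := ℝ) j]
      linarith
    · have : p j ≤ p n := hpmono hj
      rw [hpn] at this; linarith
  have hsub : ∀ j < n, Set.Ioc (p j) (p (j+1)) ⊆ Set.Icc (0:ℝ) T := by
    intro j hj s hs
    have h1 := (hpIcc j hj.le).1
    have h2 := (hpIcc (j+1) hj).2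
    exact ⟨le_of_lt (lt_of_le_of_lt h1 hs.1), hs.2.trans h2⟩
  have hpint : ∀ x y : ℝ, x ∈ Set.Icc (0:ℝ) T → y ∈ Set.Icc (0:ℝ) T →
      IntervalIntegrable (fun s => h s * Δ s) volume x y := by
    intro x y hx hy
    apply (hHΔint.mono_set _).intervalIntegrable
    exact Set.uIcc_subset_Icc hx hy
  have hΔpint : ∀ x y : ℝ, x ∈ Set.Icc (0:ℝ) T → y ∈ Set.Icc (0:ℝ) T →
      IntervalIntegrable Δ volume x y := by
    intro x y hx hy
    apply (hΔint.mono_set _).intervalIntegrable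
    exact Set.uIcc_subset_Icc hx hy
  -- adjacent sum
  have hadj := intervalIntegral.sum_integral_adjacent_intervals (μ := volume) (a := p) (n := n)
    (f := fun s => h s * Δ s)
    (fun j hj => hpint _ _ (hpIcc j hj.le) (hpIcc (j+1) hj))
  rw [hp0, hpn] at hadj
  rw [← intervalIntegral.integral_of_le hac, ← hadj]
  -- per-interval bound
  have hperj : ∀ j < n, |∫ x in p j..p (j+1), h x * Δ x|
      ≤ ε₁ * ((cc - a)/n) + M * (2 * (ε / (4 * n * (M + 1)))) := by
    intro j hj
    have hple : p j ≤ p (j+1) := hpmono (Nat.le_succ j)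
    have hdiff : p (j+1) - p j = (cc - a)/n := by simp only [hpdef]; push_cast; ring
    have hmemj := hpIcc j hj.le
    have hmemj1 := hpIcc (j+1) hj
    have hsplit : (∫ x in p j..p (j+1), h x * Δ x)
        = (∫ x in p j..p (j+1), (h x - h (p (j+1))) * Δ x)
          + h (p (j+1)) * ∫ x in p j..p (j+1), Δ x := by
      have hf : IntervalIntegrable (fun x => h x * Δ x - h (p (j+1)) * Δ x) volume (p j) (p (j+1)) :=
        (hpint _ _ hmemj hmemj1).sub ((hΔpint _ _ hmemj hmemj1).const_mul (h (p (j+1))))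
      have hg : IntervalIntegrable (fun x => h (p (j+1)) * Δ x) volume (p j) (p (j+1)) :=
        (hΔpint _ _ hmemj hmemj1).const_mul (h (p (j+1)))
      have e0 : (fun x => h x * Δ x)
          = fun x => (h x * Δ x - h (p (j+1)) * Δ x) + h (p (j+1)) * Δ x := by
        ext x; ring
      have e1 : (fun x : ℝ => (h x - h (p (j+1))) * Δ x)
          = fun x => h x * Δ x - h (p (j+1)) * Δ x := by
        ext x; ring
      rw [e0, intervalIntegral.integral_add hf hg, intervalIntegral.integral_const_mul, e1]
    rw [hsplit]
    have hb1 : |∫ x in p j..p (j+1), (h x - h (p (j+1))) * Δ x| ≤ ε₁ * ((cc - a)/n) := by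
      have := intervalIntegral.norm_integral_le_of_norm_le_const (C := ε₁)
        (f := fun x => (h x - h (p (j+1))) * Δ x) (a := p j) (b := p (j+1)) ?_
      · rw [Real.norm_eq_abs] at this
        calc |∫ x in p j..p (j+1), (h x - h (p (j+1))) * Δ x| ≤ ε₁ * |p (j+1) - p j| := this
          _ = ε₁ * ((cc - a)/n) := by rw [hdiff, abs_of_nonneg hlen]
      · intro x hx
        rw [Set.uIoc_of_le hple] at hx
        have hxT : x ∈ Set.Icc (0:ℝ) T := hsub j hj hx
        have hub : p (j+1) - x ≤ η := by
          have h1 : p (j+1) - x ≤ (cc - a)/(n:ℝ) := by rw [← hdiff]; linarith [hx.1]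
          exact h1.trans hstep
        have hmod' := hmod x hxT (p (j+1)) hmemj1 (by
          rw [Real.dist_eq, abs_le]
          constructor <;> linarith [hx.2, hη])
        rw [Real.dist_eq] at hmod'
        rw [Real.norm_eq_abs, abs_mul]
        calc |h x - h (p (j+1))| * |Δ x| ≤ ε₁ * 1 :=
          mul_le_mul hmod' (hΔbd x hxT) (abs_nonneg _) hε₁.le
          _ = ε₁ := mul_one _
    have hb2 : |h (p (j+1)) * ∫ x in p j..p (j+1), Δ x|
        ≤ M * (2 * (ε / (4 * n * (M + 1)))) := by
      rw [abs_mul]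
      apply mul_le_mul (hM _ hmemj1) _ (abs_nonneg _) hMnn
      -- ∫ Δ over subinterval
      have hadd := intervalIntegral.integral_add_adjacent_intervals
        (a := 0) (b := p j) (c := p (j+1)) (f := Δ) (μ := volume)
        (hΔpint _ _ (by simp [hT.le] : (0:ℝ) ∈ Set.Icc (0:ℝ) T) hmemj)
        (hΔpint _ _ hmemj hmemj1)
      have heq : (∫ x in p j..p (j+1), Δ x)
          = (∫ x in (0:ℝ)..p (j+1), Δ x) - ∫ x in (0:ℝ)..p j, Δ x := by linarith
      have hDval : ∀ y : ℝ, y ∈ Set.Icc (0:ℝ) T →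
          (∫ x in (0:ℝ)..y, Δ x) = (∫ s in Set.Ioc (0:ℝ) y, K' s) - ∫ s in Set.Ioc (0:ℝ) y, K s := by
        intro y hy
        rw [intervalIntegral.integral_of_le hy.1]
        apply integral_sub
        · exact ((integrable_const (1:ℝ) (μ := volume.restrict (Set.Ioc (0:ℝ) y))).bdd_mul
            (c := 1) hK'm.aestronglyMeasurable.restrict
            ((ae_restrict_iff' measurableSet_Ioc).2 (ae_of_all _ (fun s hs => by
              have := hK'b s ⟨hs.1.le, hs.2.trans hy.2⟩
              simp only [Set.mem_Icc] at this
              simp [abs_le]; constructor <;> linarith [this.1, this.2])))).congr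
            (ae_of_all _ (fun s => mul_one _))
        · exact ((integrable_const (1:ℝ) (μ := volume.restrict (Set.Ioc (0:ℝ) y))).bdd_mul
            (c := 1) hKm.aestronglyMeasurable.restrict
            ((ae_restrict_iff' measurableSet_Ioc).2 (ae_of_all _ (fun s hs => by
              have := hKb s ⟨hs.1.le, hs.2.trans hy.2⟩
              simp only [Set.mem_Icc] at this
              simp [abs_le]; constructor <;> linarith [this.1, this.2])))).congr
            (ae_of_all _ (fun s => mul_one _))
      rw [heq, hDval _ hmemj1, hDval _ hmemj]
      have h1 := hsup _ hmemj1
      have h2 := hsup _ hmemj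
      calc |((∫ s in Set.Ioc (0:ℝ) (p (j+1)), K' s) - ∫ s in Set.Ioc (0:ℝ) (p (j+1)), K s)
            - ((∫ s in Set.Ioc (0:ℝ) (p j), K' s) - ∫ s in Set.Ioc (0:ℝ) (p j), K s)|
          ≤ |(∫ s in Set.Ioc (0:ℝ) (p (j+1)), K' s) - ∫ s in Set.Ioc (0:ℝ) (p (j+1)), K s|
            + |(∫ s in Set.Ioc (0:ℝ) (p j), K' s) - ∫ s in Set.Ioc (0:ℝ) (p j), K s| :=
            abs_sub _ _
        _ ≤ 2 * (ε / (4 * n * (M + 1))) := by linarith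
    calc |(∫ x in p j..p (j+1), (h x - h (p (j+1))) * Δ x)
        + h (p (j+1)) * ∫ x in p j..p (j+1), Δ x|
        ≤ |∫ x in p j..p (j+1), (h x - h (p (j+1))) * Δ x|
          + |h (p (j+1)) * ∫ x in p j..p (j+1), Δ x| := abs_add_le _ _
      _ ≤ ε₁ * ((cc - a)/n) + M * (2 * (ε / (4 * n * (M + 1)))) := add_le_add hb1 hb2
  calc |∑ j ∈ Finset.range n, ∫ x in p j..p (j+1), h x * Δ x|
      ≤ ∑ j ∈ Finset.range n, |∫ x in p j..p (j+1), h x * Δ x| := Finset.abs_sum_le_sum_abs _ _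
    _ ≤ ∑ j ∈ Finset.range n, (ε₁ * ((cc - a)/n) + M * (2 * (ε / (4 * n * (M + 1))))) :=
        Finset.sum_le_sum (fun j hj => hperj j (Finset.mem_range.1 hj))
    _ = n * (ε₁ * ((cc - a)/n)) + n * (M * (2 * (ε / (4 * n * (M + 1))))) := by
        rw [Finset.sum_const, Finset.card_range]; push_cast; ring
    _ ≤ ε / 2 + ε / 2 := by
        apply add_le_add
        · have : (n:ℝ) * (ε₁ * ((cc - a)/n)) = ε₁ * (cc - a) := by field_simp
          rw [this, hε₁def]
          rw [div_mul_eq_mul_div, div_le_div_iff₀ (by positivity) (by norm_num)]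
          nlinarith
        · have : (n:ℝ) * (M * (2 * (ε / (4 * n * (M + 1))))) = ε * (M / (2 * (M+1))) := by
            field_simp; ring
          rw [this]
          have hhalf : M / (2 * (M + 1)) ≤ 1/2 := by
            rw [div_le_div_iff₀ (by positivity) (by norm_num)]; linarith
          calc ε * (M / (2 * (M + 1))) ≤ ε * (1/2) :=
              mul_le_mul_of_nonneg_left hhalf hε.le
            _ = ε / 2 := by ring
    _ = ε := by ring

lemma step_exists {k : ℕ} {t : Fin (k+2) → ℝ} (hm : StrictMono t) {s : ℝ}
    (h0 : t 0 < s) (hl : s ≤ t (Fin.last (k+1))) :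
    ∃ j : Fin (k+1), t j.castSucc < s ∧ s ≤ t j.succ := by
  classical
  set S : Finset (Fin (k+2)) := Finset.univ.filter (fun m => t m < s) with hS
  have h0S : (0 : Fin (k+2)) ∈ S := by simp [hS, h0]
  have hSne : S.Nonempty := ⟨0, h0S⟩
  set j' := S.max' hSne with hj'
  have hj's : t j' < s := by
    have := S.max'_mem hSne
    simp only [hS, Finset.mem_filter] at this
    exact this.2
  have hj'lt : (j' : ℕ) < k + 1 := by
    by_contra hcon
    have hjeq : j' = Fin.last (k+1) := by
      apply Fin.ext
      have := j'.isLt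
      simp only [Fin.val_last]
      omega
    rw [hjeq] at hj's; linarith
  refine ⟨⟨j', hj'lt⟩, ?_, ?_⟩
  · have he : (⟨(j' : ℕ), hj'lt⟩ : Fin (k+1)).castSucc = j' := by
      apply Fin.ext; simp
    rw [he]; exact hj's
  · by_contra hcon
    push_neg at hcon
    have hmem : ((⟨(j' : ℕ), hj'lt⟩ : Fin (k+1)).succ : Fin (k+2)) ∈ S := by
      simp only [hS, Finset.mem_filter]
      exact ⟨Finset.mem_univ _, hcon⟩
    have hle := S.le_max' _ hmem
    rw [← hj'] at hle
    have : (j' : ℕ) + 1 ≤ (j' : ℕ) := by simpa [Fin.le_def] using hle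
    omega



/-- A kernel on `[0,T] × {1,…,d}`. -/
def IsMKernel (d : ℕ) (T : ℝ) (K : ℝ → Fin d → ℝ) : Prop :=
  (∀ i : Fin d, Measurable fun s => K s i) ∧
    ∀ s ∈ Set.Icc (0:ℝ) T, (∀ i : Fin d, 0 ≤ K s i) ∧ ∑ i : Fin d, K s i = 1

/-- `lam` is a step function on `[0,T]` of the form
`λ(t) = λ₀ 1_{{0}}(t) + ∑_{j=0}^k λ_j 1_{(t_j,t_{j+1}]}(t)` for some partition
`0 = t₀ < t₁ < … < t_{k+1} = T`. -/
def IsStepFun (T : ℝ) (lam : ℝ → ℝ) : Prop :=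
  ∃ k : ℕ, ∃ t : Fin (k + 2) → ℝ, ∃ c : Fin (k + 1) → ℝ,
    StrictMono t ∧ t 0 = 0 ∧ t (Fin.last (k + 1)) = T ∧ lam 0 = c 0 ∧
    ∀ j : Fin (k + 1), ∀ s : ℝ, t j.castSucc < s → s ≤ t j.succ → lam s = c j

/-- The functional
`F_λ(ν) = ∫₀ᵀ λ φ' − ∫₀ᵀ λ b̂(ν,φ) − ∫₀ᵀ (λ²/2) σ̂²(ν,φ)`, expressed through the
kernel `K` of `ν`. -/
noncomputable def Flam (d : ℕ) (T : ℝ) (b σ : Fin d → ℝ → ℝ) (φ φd : ℝ → ℝ)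
    (lam : ℝ → ℝ) (K : ℝ → Fin d → ℝ) : ℝ :=
  (∫ s in (0:ℝ)..T, lam s * φd s)
    - (∫ s in (0:ℝ)..T, lam s * ∑ i : Fin d, b i (φ s) * K s i)
    - ∫ s in (0:ℝ)..T, (lam s) ^ 2 / 2 * ∑ i : Fin d, (σ i (φ s)) ^ 2 * K s i


/-- For Lipschitz `b, σ`, `φ ∈ ℍ_T` (with derivative `φd`) and a step function `λ`,
the map `ν ↦ F_λ(ν)` is continuous on `(𝕄_T, d_T)`, where `d_T` is the supremum
distance on `C([0,T], ℝ^d)`. -/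
theorem Flam_continuous (d : ℕ) (hd : 1 ≤ d) (T : ℝ) (hT : 0 < T)
    (b σ : Fin d → ℝ → ℝ) (C : ℝ) (hC : 0 < C)
    (hlip : ∀ i : Fin d, ∀ x y : ℝ,
      |b i x - b i y| + |σ i x - σ i y| ≤ C * |x - y|)
    (φ φd : ℝ → ℝ)
    (hφ : φ 0 = 0 ∧ Measurable φd ∧
      IntegrableOn (fun s => (φd s) ^ 2) (Set.Icc (0:ℝ) T) ∧
      ∀ t ∈ Set.Icc (0:ℝ) T, φ t = ∫ s in (0:ℝ)..t, φd s)
    (lam : ℝ → ℝ) (hlam : IsStepFun T lam) :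
    ∀ ν : C(Set.Icc (0:ℝ) T, Fin d → ℝ), ∀ K : ℝ → Fin d → ℝ, IsMKernel d T K →
      (∀ t : Set.Icc (0:ℝ) T, ∀ i : Fin d, ν t i = ∫ s in (0:ℝ)..(t:ℝ), K s i) →
      ∀ ε : ℝ, 0 < ε → ∃ δ : ℝ, 0 < δ ∧
        ∀ μ : C(Set.Icc (0:ℝ) T, Fin d → ℝ), ∀ K' : ℝ → Fin d → ℝ, IsMKernel d T K' →
          (∀ t : Set.Icc (0:ℝ) T, ∀ i : Fin d, μ t i = ∫ s in (0:ℝ)..(t:ℝ), K' s i) →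
          dist μ ν < δ →
          |Flam d T b σ φ φd lam K' - Flam d T b σ φ φd lam K| < ε := by
  classical
  intro ν K hK hν ε hε
  obtain ⟨k, t, c, htm, ht0, htlast, hlamc0, hlstep⟩ := hlam
  obtain ⟨hφ0, hφdm, hφdsq, hφrep⟩ := hφ
  -- φ is continuous on [0, T]
  have hφdint : IntegrableOn φd (Set.Icc 0 T) := by
    have hone : IntegrableOn (fun _ : ℝ => (1:ℝ)) (Set.Icc 0 T) :=
      integrableOn_const measure_Icc_lt_top.ne
    have hg : IntegrableOn (fun s => ((φd s)^2 + 1)/2) (Set.Icc (0:ℝ) T) := by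
      exact (hφdsq.add hone).div_const 2
    refine Integrable.mono' hg hφdm.aestronglyMeasurable.restrict
      (ae_of_all _ fun s => ?_)
    rw [Real.norm_eq_abs]
    nlinarith [sq_nonneg (|φd s| - 1), sq_abs (φd s), abs_nonneg (φd s)]
  have hφc : ContinuousOn φ (Set.Icc 0 T) :=
    (intervalIntegral.continuousOn_primitive hφdint).congr
      (fun x hx => by rw [hφrep x hx, intervalIntegral.integral_of_le hx.1])
  -- b i and σ i are continuous
  have hbcont : ∀ i, Continuous (b i) := by
    intro i
    refine (LipschitzWith.of_dist_le_mul (K := Real.toNNReal C) fun x y => ?_).continuous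
    rw [Real.dist_eq, Real.dist_eq, Real.coe_toNNReal _ hC.le]
    exact le_trans (le_add_of_nonneg_right (abs_nonneg _)) (hlip i x y)
  have hσcont : ∀ i, Continuous (σ i) := by
    intro i
    refine (LipschitzWith.of_dist_le_mul (K := Real.toNNReal C) fun x y => ?_).continuous
    rw [Real.dist_eq, Real.dist_eq, Real.coe_toNNReal _ hC.le]
    exact le_trans (le_add_of_nonneg_left (abs_nonneg _)) (hlip i x y)
  -- partition points lie in [0, T]
  have htmem : ∀ m : Fin (k+2), t m ∈ Set.Icc (0:ℝ) T := by
    intro m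
    constructor
    · rw [← ht0]; exact htm.monotone (Fin.zero_le m)
    · rw [← htlast]; exact htm.monotone (Fin.le_last m)
  -- the per-interval limit functions
  set f : Fin d → Fin (k+1) → ℝ → ℝ :=
    fun i j s => c j * b i (φ s) + (c j)^2/2 * (σ i (φ s))^2 with hfdef
  have hfc : ∀ i j, ContinuousOn (f i j) (Set.Icc 0 T) := by
    intro i j
    exact (continuousOn_const.mul ((hbcont i).comp_continuousOn hφc)).add
      (continuousOn_const.mul (((hσcont i).comp_continuousOn hφc).pow 2))
  -- apply the key estimate for each (i, j)
  set ε' : ℝ := ε / ((d : ℝ) * ((k:ℝ)+1) + 1) with hε'def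
  have hε' : 0 < ε' := by positivity
  have hkey : ∀ p : Fin d × Fin (k+1), ∃ δ : ℝ, 0 < δ ∧
      ∀ K K' : ℝ → ℝ, Measurable K → Measurable K' →
      (∀ s ∈ Set.Icc (0:ℝ) T, K s ∈ Set.Icc (0:ℝ) 1) →
      (∀ s ∈ Set.Icc (0:ℝ) T, K' s ∈ Set.Icc (0:ℝ) 1) →
      (∀ x ∈ Set.Icc (0:ℝ) T,
        |(∫ s in Set.Ioc (0:ℝ) x, K' s) - ∫ s in Set.Ioc (0:ℝ) x, K s| ≤ δ) →
      |∫ s in Set.Ioc (t p.2.castSucc) (t p.2.succ), f p.1 p.2 s * (K' s - K s)| ≤ ε' := by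
    intro p
    exact key_est T hT (t p.2.castSucc) (t p.2.succ) (htmem _).1
      (htm.monotone (Fin.castSucc_lt_succ (i := p.2)).le) (htmem _).2 (f p.1 p.2) (hfc p.1 p.2) ε' hε'
  choose δf hδfpos hδf using hkey
  have : Nonempty (Fin d) := ⟨⟨0, hd⟩⟩
  set δ : ℝ := Finset.univ.inf' Finset.univ_nonempty δf with hδdef
  refine ⟨δ, ?_, ?_⟩
  · rw [hδdef, Finset.lt_inf'_iff]
    exact fun p _ => hδfpos p
  intro μ K' hK' hμ hdist
  -- kernel bounds
  have hKb01 : ∀ s ∈ Set.Icc (0:ℝ) T, ∀ i, K s i ∈ Set.Icc (0:ℝ) 1 := by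
    intro s hs i
    refine ⟨(hK.2 s hs).1 i, ?_⟩
    rw [← (hK.2 s hs).2]
    exact Finset.single_le_sum (fun i _ => (hK.2 s hs).1 i) (Finset.mem_univ i)
  have hK'b01 : ∀ s ∈ Set.Icc (0:ℝ) T, ∀ i, K' s i ∈ Set.Icc (0:ℝ) 1 := by
    intro s hs i
    refine ⟨(hK'.2 s hs).1 i, ?_⟩
    rw [← (hK'.2 s hs).2]
    exact Finset.single_le_sum (fun i _ => (hK'.2 s hs).1 i) (Finset.mem_univ i)
  -- the sup distance controls the primitives
  have hsup : ∀ p : Fin d × Fin (k+1), ∀ x ∈ Set.Icc (0:ℝ) T,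
      |(∫ s in Set.Ioc (0:ℝ) x, K' s p.1) - ∫ s in Set.Ioc (0:ℝ) x, K s p.1| ≤ δf p := by
    intro p x hx
    have h1 : dist (μ ⟨x, hx⟩) (ν ⟨x, hx⟩) ≤ dist μ ν := ContinuousMap.dist_apply_le_dist _
    have h2 : dist (μ ⟨x, hx⟩ p.1) (ν ⟨x, hx⟩ p.1) ≤ dist (μ ⟨x, hx⟩) (ν ⟨x, hx⟩) :=
      dist_le_pi_dist _ _ p.1
    have h3 : δ ≤ δf p := Finset.inf'_le _ (Finset.mem_univ p)
    have h4 := hμ ⟨x, hx⟩ p.1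
    have h5 := hν ⟨x, hx⟩ p.1
    rw [Real.dist_eq] at h2
    rw [h4, h5, intervalIntegral.integral_of_le hx.1, intervalIntegral.integral_of_le hx.1] at h2
    linarith
  -- the estimates
  have hest : ∀ (i : Fin d) (j : Fin (k+1)),
      |∫ s in Set.Ioc (t j.castSucc) (t j.succ), f i j s * (K' s i - K s i)| ≤ ε' := by
    intro i j
    exact hδf (i, j) (fun s => K s i) (fun s => K' s i) (hK.1 i) (hK'.1 i)
      (fun s hs => hKb01 s hs i) (fun s hs => hK'b01 s hs i) (hsup (i, j))
  -- the measurable step function agreeing with lam on (0, T]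
  set lam0 : ℝ → ℝ := fun s => ∑ j : Fin (k+1),
    Set.indicator (Set.Ioc (t j.castSucc) (t j.succ)) (fun _ => c j) s with hlam0def
  have hlam0m : Measurable lam0 := by
    apply Finset.measurable_sum
    exact fun j _ => measurable_const.indicator measurableSet_Ioc
  have hlam0val : ∀ (j : Fin (k+1)) (s : ℝ), t j.castSucc < s → s ≤ t j.succ → lam0 s = c j := by
    intro j s h1 h2
    simp only [hlam0def]
    refine Eq.trans (Finset.sum_eq_single j ?_ ?_) (Set.indicator_of_mem (Set.mem_Ioc.mpr ⟨h1, h2⟩) _)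
    · intro j' _ hne
      apply Set.indicator_of_notMem
      intro hmem
      rcases lt_or_gt_of_ne hne with hlt | hgt
      · have hle : t j'.succ ≤ t j.castSucc := htm.monotone (by
          simp only [Fin.le_def, Fin.lt_def] at hlt ⊢
          simpa using hlt)
        have := hmem.2
        linarith
      · have hle : t j.succ ≤ t j'.castSucc := htm.monotone (by
          simp only [Fin.le_def, Fin.lt_def] at hgt ⊢
          simpa using hgt)
        have := hmem.1
        linarith
    · intro hj; exact absurd (Finset.mem_univ j) hj
  have hlam0eq : ∀ s ∈ Set.Ioc (0:ℝ) T, lam s = lam0 s := by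
    intro s hs
    obtain ⟨j, hj1, hj2⟩ := step_exists htm (ht0 ▸ hs.1) (htlast ▸ hs.2)
    rw [hlstep j s hj1 hj2, hlam0val j s hj1 hj2]
  set Mc : ℝ := ∑ j : Fin (k+1), |c j| with hMcdef
  have hMcnn : 0 ≤ Mc := Finset.sum_nonneg fun j _ => abs_nonneg _
  have hMc : ∀ s, |lam0 s| ≤ Mc := by
    intro s
    simp only [hlam0def]
    refine (Finset.abs_sum_le_sum_abs _ _).trans (Finset.sum_le_sum fun j _ => ?_)
    rw [Set.indicator_apply]
    split_ifs
    · exact le_rfl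
    · simpa using abs_nonneg (c j)
  -- integrability helpers
  have hsubIoc : Set.Ioc (0:ℝ) T ⊆ Set.Icc 0 T := Set.Ioc_subset_Icc_self
  have hintb : ∀ (Q : ℝ → Fin d → ℝ), (∀ i, Measurable fun s => Q s i) →
      (∀ s ∈ Set.Icc (0:ℝ) T, ∀ i, Q s i ∈ Set.Icc (0:ℝ) 1) → ∀ ii : Fin d,
      IntegrableOn (fun s => lam0 s * (b ii (φ s) * Q s ii)) (Set.Ioc 0 T) := by
    intro Q hQm hQb ii
    have hF : IntegrableOn (fun s => b ii (φ s)) (Set.Icc 0 T) :=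
      ((hbcont ii).comp_continuousOn hφc).integrableOn_Icc
    have hmeas : Measurable (fun s => lam0 s * Q s ii) := hlam0m.mul (hQm ii)
    have hbd : ∀ s ∈ Set.Ioc (0:ℝ) T, |lam0 s * Q s ii| ≤ Mc := by
      intro s hs
      rw [abs_mul]
      have h01 := hQb s (hsubIoc hs) ii
      have habs : |Q s ii| ≤ 1 := abs_le.2 ⟨by linarith [h01.1], h01.2⟩
      calc |lam0 s| * |Q s ii| ≤ Mc * 1 :=
          mul_le_mul (hMc s) habs (abs_nonneg _) hMcnn
        _ = Mc := mul_one _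
    have hres := (hF.mono_set hsubIoc).bdd_mul (c := Mc) hmeas.aestronglyMeasurable.restrict
      ((ae_restrict_iff' measurableSet_Ioc).2 (ae_of_all _ fun s hs => by
        rw [Real.norm_eq_abs]; exact hbd s hs))
    exact hres.congr (ae_of_all _ fun s => by ring)
  have hintσ : ∀ (Q : ℝ → Fin d → ℝ), (∀ i, Measurable fun s => Q s i) →
      (∀ s ∈ Set.Icc (0:ℝ) T, ∀ i, Q s i ∈ Set.Icc (0:ℝ) 1) → ∀ ii : Fin d,
      IntegrableOn (fun s => lam0 s^2/2 * ((σ ii (φ s))^2 * Q s ii)) (Set.Ioc 0 T) := by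
    intro Q hQm hQb ii
    have hF : IntegrableOn (fun s => (σ ii (φ s))^2) (Set.Icc 0 T) :=
      (((hσcont ii).comp_continuousOn hφc).pow 2).integrableOn_Icc
    have hmeas : Measurable (fun s => lam0 s^2/2 * Q s ii) :=
      ((hlam0m.pow_const 2).div_const 2).mul (hQm ii)
    have hbd : ∀ s ∈ Set.Ioc (0:ℝ) T, |lam0 s^2/2 * Q s ii| ≤ Mc^2/2 := by
      intro s hs
      rw [abs_mul]
      have h01 := hQb s (hsubIoc hs) ii
      have habs : |Q s ii| ≤ 1 := abs_le.2 ⟨by linarith [h01.1], h01.2⟩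
      have h2 : |lam0 s^2/2| ≤ Mc^2/2 := by
        rw [abs_of_nonneg (by positivity : (0:ℝ) ≤ lam0 s^2/2)]
        nlinarith [hMc s, abs_nonneg (lam0 s), sq_abs (lam0 s)]
      calc |lam0 s^2/2| * |Q s ii| ≤ (Mc^2/2) * 1 :=
          mul_le_mul h2 habs (abs_nonneg _) (by positivity)
        _ = Mc^2/2 := mul_one _
    have hres := (hF.mono_set hsubIoc).bdd_mul (c := Mc^2/2) hmeas.aestronglyMeasurable.restrict
      ((ae_restrict_iff' measurableSet_Ioc).2 (ae_of_all _ fun s hs => by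
        rw [Real.norm_eq_abs]; exact hbd s hs))
    exact hres.congr (ae_of_all _ fun s => by ring)
  set Δ : ℝ → Fin d → ℝ := fun s i => K' s i - K s i with hΔdef
  set gg : Fin d → ℝ → ℝ :=
    fun ii s => lam0 s * b ii (φ s) + lam0 s^2/2 * (σ ii (φ s))^2 with hggdef
  have hggΔint : ∀ ii, IntegrableOn (fun s => gg ii s * Δ s ii) (Set.Ioc (0:ℝ) T) := by
    intro ii
    have h1 := hintb K' hK'.1 hK'b01 ii
    have h2 := hintb K hK.1 hKb01 ii
    have h3 := hintσ K' hK'.1 hK'b01 ii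
    have h4 := hintσ K hK.1 hKb01 ii
    exact ((h1.sub h2).add (h3.sub h4)).congr (ae_of_all _ fun s => by
      simp only [hggdef, hΔdef, Pi.add_apply, Pi.sub_apply]; ring)
  -- rewriting the Flam integrals
  have convb : ∀ (Q : ℝ → Fin d → ℝ), (∀ i, Measurable fun s => Q s i) →
      ∀ (hQb : ∀ s ∈ Set.Icc (0:ℝ) T, ∀ i, Q s i ∈ Set.Icc (0:ℝ) 1),
      (∫ s in (0:ℝ)..T, lam s * ∑ i : Fin d, b i (φ s) * Q s i)
        = ∑ ii : Fin d, ∫ s in Set.Ioc (0:ℝ) T, lam0 s * (b ii (φ s) * Q s ii) := by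
    intro Q hQm hQb
    rw [intervalIntegral.integral_of_le hT.le]
    rw [setIntegral_congr_fun (g := fun s => ∑ ii : Fin d, lam0 s * (b ii (φ s) * Q s ii))
      measurableSet_Ioc (fun s hs => by rw [hlam0eq s hs, Finset.mul_sum])]
    exact integral_finset_sum _ (fun ii _ => hintb Q hQm hQb ii)
  have convσ : ∀ (Q : ℝ → Fin d → ℝ), (∀ i, Measurable fun s => Q s i) →
      ∀ (hQb : ∀ s ∈ Set.Icc (0:ℝ) T, ∀ i, Q s i ∈ Set.Icc (0:ℝ) 1),
      (∫ s in (0:ℝ)..T, (lam s)^2/2 * ∑ i : Fin d, (σ i (φ s))^2 * Q s i)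
        = ∑ ii : Fin d, ∫ s in Set.Ioc (0:ℝ) T, lam0 s^2/2 * ((σ ii (φ s))^2 * Q s ii) := by
    intro Q hQm hQb
    rw [intervalIntegral.integral_of_le hT.le]
    rw [setIntegral_congr_fun (g := fun s => ∑ ii : Fin d, lam0 s^2/2 * ((σ ii (φ s))^2 * Q s ii))
      measurableSet_Ioc (fun s hs => by rw [hlam0eq s hs, Finset.mul_sum])]
    exact integral_finset_sum _ (fun ii _ => hintσ Q hQm hQb ii)
  have hCeq : ∀ ii : Fin d, (∫ s in Set.Ioc (0:ℝ) T, gg ii s * Δ s ii)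
      = ((∫ s in Set.Ioc (0:ℝ) T, lam0 s * (b ii (φ s) * K' s ii))
          - ∫ s in Set.Ioc (0:ℝ) T, lam0 s * (b ii (φ s) * K s ii))
        + ((∫ s in Set.Ioc (0:ℝ) T, lam0 s^2/2 * ((σ ii (φ s))^2 * K' s ii))
          - ∫ s in Set.Ioc (0:ℝ) T, lam0 s^2/2 * ((σ ii (φ s))^2 * K s ii)) := by
    intro ii
    have hf1 : IntegrableOn (fun s =>
        lam0 s * (b ii (φ s) * K' s ii) - lam0 s * (b ii (φ s) * K s ii)) (Set.Ioc 0 T) :=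
      (hintb K' hK'.1 hK'b01 ii).sub (hintb K hK.1 hKb01 ii)
    have hf2 : IntegrableOn (fun s =>
        lam0 s^2/2 * ((σ ii (φ s))^2 * K' s ii) - lam0 s^2/2 * ((σ ii (φ s))^2 * K s ii))
        (Set.Ioc 0 T) :=
      (hintσ K' hK'.1 hK'b01 ii).sub (hintσ K hK.1 hKb01 ii)
    rw [← integral_sub (hintb K' hK'.1 hK'b01 ii) (hintb K hK.1 hKb01 ii),
        ← integral_sub (hintσ K' hK'.1 hK'b01 ii) (hintσ K hK.1 hKb01 ii),
        ← integral_add hf1 hf2]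
    congr 1
    funext s
    simp only [hggdef, hΔdef]
    ring
  have hD : Flam d T b σ φ φd lam K' - Flam d T b σ φ φd lam K
      = -∑ ii : Fin d, ∫ s in Set.Ioc (0:ℝ) T, gg ii s * Δ s ii := by
    unfold Flam
    rw [convb K hK.1 hKb01, convb K' hK'.1 hK'b01, convσ K hK.1 hKb01, convσ K' hK'.1 hK'b01]
    rw [Finset.sum_congr rfl (fun ii _ => hCeq ii)]
    rw [Finset.sum_add_distrib, Finset.sum_sub_distrib, Finset.sum_sub_distrib]
    ring
  -- splitting into the partition intervals
  have hklt : ∀ m : ℕ, min m (k+1) < k + 2 := fun m => Nat.lt_succ_of_le (min_le_right _ _)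
  set t' : ℕ → ℝ := fun m => t ⟨min m (k+1), hklt m⟩ with ht'def
  have ht'mono : Monotone t' := by
    intro m m' hmm
    apply htm.monotone
    simp only [Fin.le_def]
    omega
  have ht'0 : t' 0 = 0 := by
    simp only [ht'def]
    rw [← ht0]
    congr 1
  have ht'last : t' (k+1) = T := by
    simp only [ht'def]
    rw [← htlast]
    congr 1
    apply Fin.ext
    simp [Fin.val_last]
  have ht'mem : ∀ m, t' m ∈ Set.Icc (0:ℝ) T := fun m => htmem _
  have hcast1 : ∀ (m : ℕ) (hm : m < k+1), t' m = t (⟨m, hm⟩ : Fin (k+1)).castSucc := by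
    intro m hm
    simp only [ht'def]
    congr 1
    apply Fin.ext
    simp [Fin.castSucc]
    omega
  have hcast2 : ∀ (m : ℕ) (hm : m < k+1), t' (m+1) = t (⟨m, hm⟩ : Fin (k+1)).succ := by
    intro m hm
    simp only [ht'def]
    congr 1
    apply Fin.ext
    simp
    omega
  have hsplitI : ∀ ii : Fin d, (∫ s in Set.Ioc (0:ℝ) T, gg ii s * Δ s ii)
      = ∑ m ∈ Finset.range (k+1), ∫ s in Set.Ioc (t' m) (t' (m+1)), gg ii s * Δ s ii := by
    intro ii
    have hints : ∀ m, m < k+1 →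
        IntervalIntegrable (fun s => gg ii s * Δ s ii) volume (t' m) (t' (m+1)) := by
      intro m _
      rw [intervalIntegrable_iff_integrableOn_Ioc_of_le (ht'mono (Nat.le_succ m))]
      refine (hggΔint ii).mono_set ?_
      intro x hx
      exact ⟨lt_of_le_of_lt (ht'mem m).1 hx.1, hx.2.trans (ht'mem (m+1)).2⟩
    have hadj := intervalIntegral.sum_integral_adjacent_intervals (a := t') (n := k+1) hints
    rw [ht'0, ht'last] at hadj
    rw [← intervalIntegral.integral_of_le hT.le, ← hadj]
    refine Finset.sum_congr rfl fun m _ => ?_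
    rw [intervalIntegral.integral_of_le (ht'mono (Nat.le_succ m))]
  have hbd_i : ∀ ii : Fin d, |∫ s in Set.Ioc (0:ℝ) T, gg ii s * Δ s ii| ≤ ((k:ℝ)+1) * ε' := by
    intro ii
    rw [hsplitI ii]
    calc |∑ m ∈ Finset.range (k+1), ∫ s in Set.Ioc (t' m) (t' (m+1)), gg ii s * Δ s ii|
        ≤ ∑ m ∈ Finset.range (k+1), |∫ s in Set.Ioc (t' m) (t' (m+1)), gg ii s * Δ s ii| :=
          Finset.abs_sum_le_sum_abs _ _
      _ ≤ ∑ m ∈ Finset.range (k+1), ε' := by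
          refine Finset.sum_le_sum fun m hm => ?_
          have hm' : m < k+1 := Finset.mem_range.1 hm
          rw [hcast1 m hm', hcast2 m hm']
          rw [setIntegral_congr_fun (g := fun s => f ii ⟨m, hm'⟩ s * (K' s ii - K s ii))
            measurableSet_Ioc (fun s hs => by
              simp only [hggdef, hΔdef, hfdef]
              rw [hlam0val ⟨m, hm'⟩ s hs.1 hs.2])]
          exact hest ii ⟨m, hm'⟩
      _ = ((k:ℝ)+1) * ε' := by
          rw [Finset.sum_const, Finset.card_range, nsmul_eq_mul]
          push_cast
          ring
  rw [hD, abs_neg]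
  calc |∑ ii : Fin d, ∫ s in Set.Ioc (0:ℝ) T, gg ii s * Δ s ii|
      ≤ ∑ ii : Fin d, |∫ s in Set.Ioc (0:ℝ) T, gg ii s * Δ s ii| :=
        Finset.abs_sum_le_sum_abs _ _
    _ ≤ ∑ _ii : Fin d, ((k:ℝ)+1) * ε' := Finset.sum_le_sum fun ii _ => hbd_i ii
    _ = (d:ℝ) * (((k:ℝ)+1) * ε') := by
        rw [Finset.sum_const, Finset.card_univ, Fintype.card_fin, nsmul_eq_mul]
    _ < ε := by
        have hD0 : 0 < (d:ℝ) * ((k:ℝ)+1) + 1 := by positivity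
        rw [hε'def]
        have hlt : (d:ℝ) * ((k:ℝ)+1) < (d:ℝ) * ((k:ℝ)+1) + 1 := by linarith
        calc (d:ℝ) * (((k:ℝ)+1) * (ε / ((d:ℝ)*((k:ℝ)+1)+1)))
            = ε * (((d:ℝ)*((k:ℝ)+1)) / ((d:ℝ)*((k:ℝ)+1)+1)) := by ring
          _ < ε * 1 := by
              refine mul_lt_mul_of_pos_left ?_ hε
              rw [div_lt_one hD0]
              exact hlt
          _ = ε := mul_one ε
end

section
/- Fix an integer d ≥ 1, T > 0, and functions b, σ : {1,…,d} × ℝ → ℝ satisfying |b(i,x)−b(i,y)| + |σ(i,x)−σ(i,y)| ≤ K|x−y| for some K > 0 and all i, x, y. Fix φ ∈ ℍ_T and define Λ : 𝕄_T → [0,∞] by Λ(ν) = sup_λ [ ∫₀ᵀ λ(s) φ'(s) ds − ∫₀ᵀ λ(s) b̂(ν, φ(s))(s) ds − ∫₀ᵀ (λ(s)²/2) σ̂²(ν, φ(s))(s) ds ], where the supremum is over all step functions λ : [0,T] → ℝ of the form λ(t) = λ₀·1_{{0}}(t) + Σ_{j=0}^k λ_j·1_{(t_j, t_{j+1}]}(t)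 with 0 = t₀ < t₁ < … < t_{k+1} = T and λ₀,…,λ_k ∈ ℝ. Then Λ is lower semicontinuous on (𝕄_T, d_T). -/
open MeasureTheory

/-- `Λ(ν) = sup_λ F_λ(ν)`, the supremum over all step functions `λ` on `[0,T]`, as an
extended real number; expressed through the kernel `K` of `ν`. -/
noncomputable def Lambda (d : ℕ) (T : ℝ) (b σ : Fin d → ℝ → ℝ) (φ φd : ℝ → ℝ)
    (K : ℝ → Fin d → ℝ) : EReal :=
  ⨆ lam : {lam : ℝ → ℝ // IsStepFun T lam},
    ((Flam d T b σ φ φd lam.1 K : ℝ) : EReal)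


/-- bounded measurable function is interval integrable -/
lemma auxF {a b M : ℝ} (hab : a ≤ b) {f : ℝ → ℝ} (hf : Measurable f)
    (hM : ∀ s ∈ Set.Icc a b, |f s| ≤ M) :
    IntervalIntegrable f volume a b := by
  rw [intervalIntegrable_iff_integrableOn_Ioc_of_le hab]
  refine Integrable.mono' (integrable_const M) hf.aestronglyMeasurable ?_
  refine (ae_restrict_iff' measurableSet_Ioc).2 (.of_forall fun s hs => ?_)
  exact hM s (Set.Ioc_subset_Icc_self hs)

/-- continuous-on times bounded measurable is integrable on Ioc -/
lemma auxGF {a b M : ℝ} (hab : a ≤ b) {g f : ℝ → ℝ}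
    (hg : ContinuousOn g (Set.Icc a b)) (hf : Measurable f)
    (hM : ∀ s ∈ Set.Icc a b, |f s| ≤ M) :
    IntegrableOn (fun s => g s * f s) (Set.Ioc a b) := by
  obtain ⟨Mg, hMg⟩ := isCompact_Icc.exists_bound_of_continuousOn hg
  refine Integrable.mono' (integrable_const (Mg * M)) ?_ ?_
  · exact ((hg.aestronglyMeasurable measurableSet_Icc).mono_measure
      (Measure.restrict_mono Set.Ioc_subset_Icc_self le_rfl)).mul
      hf.aestronglyMeasurable
  · refine (ae_restrict_iff' measurableSet_Ioc).2 (.of_forall fun s hs => ?_)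
    have hs' : s ∈ Set.Icc a b := Set.Ioc_subset_Icc_self hs
    have h1 := hMg s hs'
    rw [Real.norm_eq_abs] at h1 ⊢
    rw [abs_mul]
    exact mul_le_mul h1 (hM s hs') (abs_nonneg _) ((abs_nonneg _).trans h1)

lemma auxGF' {a b M : ℝ} (hab : a ≤ b) {g f : ℝ → ℝ}
    (hg : ContinuousOn g (Set.Icc a b)) (hf : Measurable f)
    (hM : ∀ s ∈ Set.Icc a b, |f s| ≤ M) :
    IntervalIntegrable (fun s => g s * f s) volume a b := by
  rw [intervalIntegrable_iff_integrableOn_Ioc_of_le hab]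
  exact auxGF hab hg hf hM

open intervalIntegral in
/-- core estimate: if primitives of `f` are uniformly small, `∫ g f` is small. -/
lemma core {a b : ℝ} (hab : a ≤ b) {g : ℝ → ℝ} (hg : ContinuousOn g (Set.Icc a b))
    {ε : ℝ} (hε : 0 < ε) :
    ∃ δ : ℝ, 0 < δ ∧ ∀ f : ℝ → ℝ, Measurable f → (∀ s ∈ Set.Icc a b, |f s| ≤ 1) →
      (∀ r ∈ Set.Icc a b, |∫ s in a..r, f s| ≤ δ) →
      |∫ s in a..b, g s * f s| < ε := by
  rcases eq_or_lt_of_le hab with rfl | hab'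
  · exact ⟨1, one_pos, fun f _ _ _ => by simpa using hε⟩
  obtain ⟨Mg, hMg⟩ := isCompact_Icc.exists_bound_of_continuousOn hg
  set M : ℝ := Mg + 1 with hM
  have hMpos : 0 < M := by
    have := hMg a ⟨le_refl a, hab⟩
    have := norm_nonneg (g a)
    simp only [hM]; linarith
  have hba : 0 < b - a := by linarith
  set ε' : ℝ := ε / (4 * (b - a)) with hε'def
  have hε' : 0 < ε' := by positivity
  have huc := (isCompact_Icc.uniformContinuousOn_of_continuous hg)
  obtain ⟨η, hη, hucη⟩ := Metric.uniformContinuousOn_iff.mp huc ε' hε'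
  set N : ℕ := ⌈(b - a) / η⌉₊ + 1 with hNdef
  have hNpos : 0 < (N : ℝ) := by positivity
  set Δ : ℝ := (b - a) / N with hΔdef
  have hΔpos : 0 < Δ := by positivity
  have hΔη : Δ < η := by
    rw [hΔdef, div_lt_iff₀ hNpos]
    have hceil := Nat.le_ceil ((b - a) / η)
    have h1 : (b - a) / η < (N : ℝ) := by
      have : ((⌈(b - a) / η⌉₊ : ℝ)) < N := by simp only [hNdef]; push_cast; linarith
      linarith
    have := (div_lt_iff₀ hη).mp h1
    linarith
  set u : ℕ → ℝ := fun m => a + m * Δ with hudef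
  have hu0 : u 0 = a := by simp [hudef]
  have huN : u N = b := by
    simp only [hudef, hΔdef]; field_simp; ring
  have humem : ∀ m : ℕ, m ≤ N → u m ∈ Set.Icc a b := by
    intro m hm
    constructor
    · simp only [hudef]; nlinarith [hΔpos]
    · have : (m : ℝ) * Δ ≤ N * Δ := by
        apply mul_le_mul_of_nonneg_right _ hΔpos.le
        exact_mod_cast hm
      simp only [hudef]
      have : a + N * Δ = b := by rw [← huN]
      nlinarith [hΔpos]
  refine ⟨ε / (8 * N * M), by positivity, fun f hf hfb hprim => ?_⟩
  set δ : ℝ := ε / (8 * N * M) with hδdef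
  -- integrability on pieces
  have hsub : ∀ m : ℕ, m < N → Set.Icc (u m) (u (m + 1)) ⊆ Set.Icc a b := by
    intro m hm
    apply Set.Icc_subset_Icc (humem m hm.le).1 (humem (m+1) hm).2
  have hint : ∀ m < N, IntervalIntegrable (fun s => g s * f s) volume (u m) (u (m + 1)) := by
    intro m hm
    have hle : u m ≤ u (m + 1) := by
      simp only [hudef]; push_cast; nlinarith [hΔpos]
    exact auxGF' hle (hg.mono (hsub m hm)) hf (fun s hs => hfb s (hsub m hm hs))
  have hsum := intervalIntegral.sum_integral_adjacent_intervals hint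
  rw [hu0, huN] at hsum
  rw [← hsum]
  -- bound each term
  have hbound : ∀ m ∈ Finset.range N,
      |∫ s in u m..u (m + 1), g s * f s| ≤ M * (2 * δ) + ε' * Δ := by
    intro m hm
    rw [Finset.mem_range] at hm
    have hle : u m ≤ u (m + 1) := by
      simp only [hudef]; push_cast; nlinarith [hΔpos]
    have humem' := humem m hm.le
    have humem'' := humem (m+1) hm
    have hfint : ∀ r ∈ Set.Icc a b, IntervalIntegrable f volume a r := by
      intro r hr
      exact auxF hr.1 hf (fun s hs => hfb s ⟨hs.1, hs.2.trans hr.2⟩)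
    -- decompose
    have hdecomp : (fun s => g s * f s)
        = fun s => (g s - g (u m)) * f s + g (u m) * f s := by funext s; ring
    have hint1 : IntervalIntegrable (fun s => (g s - g (u m)) * f s) volume (u m) (u (m+1)) :=
      auxGF' hle ((hg.mono (hsub m hm)).sub continuousOn_const) hf
        (fun s hs => hfb s (hsub m hm hs))
    have hint2 : IntervalIntegrable (fun s => g (u m) * f s) volume (u m) (u (m+1)) :=
      (auxF hle hf (fun s hs => hfb s (hsub m hm hs))).const_mul _
    rw [hdecomp, intervalIntegral.integral_add hint1 hint2,
      intervalIntegral.integral_const_mul]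
    have hfsub : ∫ s in u m..u (m+1), f s
        = (∫ s in a..u (m+1), f s) - ∫ s in a..u m, f s := by
      rw [intervalIntegral.integral_interval_sub_left (hfint _ humem'') (hfint _ humem')]
    have hA : |∫ s in u m..u (m+1), (g s - g (u m)) * f s| ≤ ε' * Δ := by
      have := intervalIntegral.norm_integral_le_of_norm_le_const
        (f := fun s => (g s - g (u m)) * f s) (a := u m) (b := u (m+1)) (C := ε')
        (fun x hx => by
          rw [Set.uIoc_of_le hle] at hx
          have hx' : x ∈ Set.Icc a b := hsub m hm (Set.Ioc_subset_Icc_self hx)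
          have hd : dist x (u m) < η := by
            rw [Real.dist_eq, abs_of_nonneg (by linarith [hx.1.le])]
            have : x ≤ u m + Δ := by
              have : u (m+1) = u m + Δ := by simp only [hudef]; push_cast; ring
              linarith [hx.2]
            linarith
          have hgd := hucη x hx' (u m) humem' hd
          rw [Real.dist_eq] at hgd
          rw [Real.norm_eq_abs, abs_mul]
          calc |g x - g (u m)| * |f x| ≤ ε' * 1 :=
            mul_le_mul hgd.le (hfb x hx') (abs_nonneg _) hε'.le
          _ = ε' := mul_one _)
      rw [Real.norm_eq_abs] at this
      have heq : |u (m+1) - u m| = Δ := by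
        rw [abs_of_nonneg (by linarith)]
        simp only [hudef]; push_cast; ring
      rw [heq] at this; exact this
    have hB : |g (u m) * ∫ s in u m..u (m+1), f s| ≤ M * (2 * δ) := by
      rw [abs_mul, hfsub]
      have h1 : |g (u m)| ≤ M := by
        have := hMg (u m) humem'
        rw [Real.norm_eq_abs] at this; simp only [hM]; linarith
      have h2 : |(∫ s in a..u (m+1), f s) - ∫ s in a..u m, f s| ≤ 2 * δ := by
        have := hprim (u (m+1)) humem''
        have := hprim (u m) humem'
        calc |(∫ s in a..u (m+1), f s) - ∫ s in a..u m, f s|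
            ≤ |∫ s in a..u (m+1), f s| + |∫ s in a..u m, f s| := abs_sub _ _
        _ ≤ 2 * δ := by linarith
      exact mul_le_mul h1 h2 (abs_nonneg _) (by linarith)
    calc |(∫ s in u m..u (m+1), (g s - g (u m)) * f s)
          + g (u m) * ∫ s in u m..u (m+1), f s|
        ≤ |∫ s in u m..u (m+1), (g s - g (u m)) * f s|
          + |g (u m) * ∫ s in u m..u (m+1), f s| := abs_add_le _ _
    _ ≤ ε' * Δ + M * (2 * δ) := add_le_add hA hB
    _ = M * (2 * δ) + ε' * Δ := by ring
  calc |∑ m ∈ Finset.range N, ∫ s in u m..u (m + 1), g s * f s|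
      ≤ ∑ m ∈ Finset.range N, |∫ s in u m..u (m + 1), g s * f s| :=
        Finset.abs_sum_le_sum_abs _ _
  _ ≤ ∑ _m ∈ Finset.range N, (M * (2 * δ) + ε' * Δ) := Finset.sum_le_sum hbound
  _ = N * (M * (2 * δ)) + N * (ε' * Δ) := by
      rw [Finset.sum_const, Finset.card_range]; push_cast; ring
  _ = ε / 4 + ε / 4 := by
      rw [hδdef, hε'def, hΔdef]; field_simp; ring
  _ < ε := by linarith

/-- representation of `∫ lam * H` as a sum over the pieces of the step function -/
lemma step_repr {T : ℝ} {lam : ℝ → ℝ} {k : ℕ} {t : Fin (k + 2) → ℝ}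
    {cs : Fin (k + 1) → ℝ} (hmono : StrictMono t) (ht0 : t 0 = 0)
    (htT : t (Fin.last (k + 1)) = T)
    (hpiece : ∀ j : Fin (k + 1), ∀ s : ℝ, t j.castSucc < s → s ≤ t j.succ → lam s = cs j)
    {H : ℝ → ℝ} (hH : IntegrableOn H (Set.Ioc 0 T)) :
    ∫ s in (0:ℝ)..T, lam s * H s
      = ∑ j : Fin (k + 1), cs j * ∫ s in (t j.castSucc)..(t j.succ), H s := by
  set u : ℕ → ℝ := fun n => t ⟨min n (k + 1), by omega⟩ with hudef
  have hu0 : u 0 = 0 := by simpa [hudef] using ht0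
  have huN : u (k + 1) = T := by
    simpa [hudef, Fin.last] using htT
  have hucast : ∀ m : ℕ, (hm : m < k + 1) → u m = t (Fin.castSucc ⟨m, hm⟩) := by
    intro m hm
    simp only [hudef, Fin.castSucc, Fin.castAdd, Fin.castLE]
    congr 1
    exact Fin.ext (by simp; omega)
  have husucc : ∀ m : ℕ, (hm : m < k + 1) → u (m + 1) = t (Fin.succ ⟨m, hm⟩) := by
    intro m hm
    simp only [hudef, Fin.succ]
    congr 1
    exact Fin.ext (by simp; omega)
  have humono : ∀ m : ℕ, m < k + 1 → u m < u (m + 1) := by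
    intro m hm
    rw [hucast m hm, husucc m hm]
    exact hmono Fin.castSucc_lt_succ
  have humem : ∀ m : ℕ, m ≤ k + 1 → u m ∈ Set.Icc (0:ℝ) T := by
    intro m hm
    constructor
    · rw [← hu0]; exact hmono.monotone (Fin.mk_le_mk.mpr (by omega))
    · rw [← huN]; exact hmono.monotone (Fin.mk_le_mk.mpr (by omega))
  have hintc : ∀ m : ℕ, (hm : m < k + 1) →
      IntervalIntegrable (fun s => cs ⟨m, hm⟩ * H s) volume (u m) (u (m + 1)) := by
    intro m hm
    rw [intervalIntegrable_iff_integrableOn_Ioc_of_le (humono m hm).le]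
    exact (hH.mono_set (Set.Ioc_subset_Ioc (humem m hm.le).1 (humem (m+1) hm).2)).const_mul _
  have heqon : ∀ m : ℕ, (hm : m < k + 1) → ∀ s ∈ Set.Ioc (u m) (u (m + 1)),
      lam s * H s = cs ⟨m, hm⟩ * H s := by
    intro m hm s hs
    rw [hpiece ⟨m, hm⟩ s (by rw [← hucast m hm]; exact hs.1) (by rw [← husucc m hm]; exact hs.2)]
  have hint : ∀ m < k + 1, IntervalIntegrable (fun s => lam s * H s) volume (u m) (u (m + 1)) := by
    intro m hm
    rw [intervalIntegrable_iff_integrableOn_Ioc_of_le (humono m hm).le]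
    refine ((hintc m hm).1.congr ?_)
    refine (ae_restrict_iff' measurableSet_Ioc).2 (.of_forall fun s hs => ?_)
    exact (heqon m hm s hs).symm
  have hsum := intervalIntegral.sum_integral_adjacent_intervals hint
  rw [hu0, huN] at hsum
  rw [← hsum]
  rw [← Fin.sum_univ_eq_sum_range (fun m => ∫ x in u m..u (m + 1), lam x * H x) (k + 1)]
  apply Finset.sum_congr rfl
  intro j _
  have hj : (j : ℕ) < k + 1 := j.isLt
  have h1 : ∫ x in u j..u (j + 1), lam x * H x
      = ∫ x in u j..u (j + 1), cs ⟨j, hj⟩ * H x := by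
    apply intervalIntegral.integral_congr_ae
    refine .of_forall fun s hs => ?_
    rw [Set.uIoc_of_le (humono j hj).le] at hs
    exact heqon j hj s hs
  rw [h1, intervalIntegral.integral_const_mul, hucast j hj, husucc j hj]

/-- For Lipschitz `b, σ` and `φ ∈ ℍ_T`, the functional `Λ` is lower semicontinuous
on `(𝕄_T, d_T)`, where `d_T` is the supremum distance on `C([0,T], ℝ^d)`. -/
theorem Lambda_lowerSemicontinuous (d : ℕ) (hd : 1 ≤ d) (T : ℝ) (hT : 0 < T)
    (b σ : Fin d → ℝ → ℝ) (C : ℝ) (hC : 0 < C)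
    (hlip : ∀ i : Fin d, ∀ x y : ℝ,
      |b i x - b i y| + |σ i x - σ i y| ≤ C * |x - y|)
    (φ φd : ℝ → ℝ)
    (hφ : φ 0 = 0 ∧ Measurable φd ∧
      IntegrableOn (fun s => (φd s) ^ 2) (Set.Icc (0:ℝ) T) ∧
      ∀ t ∈ Set.Icc (0:ℝ) T, φ t = ∫ s in (0:ℝ)..t, φd s) :
    ∀ ν : C(Set.Icc (0:ℝ) T, Fin d → ℝ), ∀ K : ℝ → Fin d → ℝ, IsMKernel d T K →
      (∀ t : Set.Icc (0:ℝ) T, ∀ i : Fin d, ν t i = ∫ s in (0:ℝ)..(t:ℝ), K s i) →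
      ∀ c : EReal, c < Lambda d T b σ φ φd K → ∃ δ : ℝ, 0 < δ ∧
        ∀ μ : C(Set.Icc (0:ℝ) T, Fin d → ℝ), ∀ K' : ℝ → Fin d → ℝ, IsMKernel d T K' →
          (∀ t : Set.Icc (0:ℝ) T, ∀ i : Fin d, μ t i = ∫ s in (0:ℝ)..(t:ℝ), K' s i) →
          dist μ ν < δ → c < Lambda d T b σ φ φd K' := by
  obtain ⟨hφ0, hφdm, hφd2, hφeq⟩ := hφ
  intro ν K hK hν c hc
  rw [Lambda, lt_iSup_iff] at hc
  obtain ⟨lam, hc⟩ := hc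
  obtain ⟨z, hcz, hzF⟩ := exists_between hc
  have hzbot : z ≠ ⊥ := ne_bot_of_gt hcz
  have hztop : z ≠ ⊤ := ne_top_of_lt hzF
  set x : ℝ := z.toReal with hxdef
  have hzx : z = (x : EReal) := (EReal.coe_toReal hztop hzbot).symm
  have hxF : x < Flam d T b σ φ φd lam.1 K := by
    rw [hzx] at hzF; exact_mod_cast hzF
  set ε : ℝ := Flam d T b σ φ φd lam.1 K - x with hεdef
  have hε : 0 < ε := by simp only [hεdef]; linarith
  -- integrability and continuity of φ
  have hφd_int : IntegrableOn φd (Set.Icc 0 T) := by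
    have h1 : IntegrableOn (fun _ : ℝ => (1:ℝ)) (Set.Icc (0:ℝ) T) :=
      integrableOn_const measure_Icc_lt_top.ne
    have h2 : IntegrableOn (fun s => (φd s) ^ 2 + 1) (Set.Icc (0:ℝ) T) := hφd2.add h1
    refine h2.mono' hφdm.aestronglyMeasurable (.of_forall fun s => ?_)
    rw [Real.norm_eq_abs]
    nlinarith [abs_nonneg (φd s), sq_abs (φd s)]
  have hφcont : ContinuousOn φ (Set.Icc 0 T) := by
    have h1 : IntegrableOn φd (Set.uIcc 0 T) := by rwa [Set.uIcc_of_le hT.le]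
    have h2 := intervalIntegral.continuousOn_primitive_interval h1
    rw [Set.uIcc_of_le hT.le] at h2
    exact h2.congr hφeq
  -- continuity of coefficients
  have hbc : ∀ i : Fin d, Continuous (b i) := by
    intro i
    refine (LipschitzWith.of_dist_le_mul (K := Real.toNNReal C) fun x y => ?_).continuous
    rw [Real.dist_eq, Real.dist_eq, Real.coe_toNNReal _ hC.le]
    have h1 := hlip i x y
    have h2 := abs_nonneg (σ i x - σ i y)
    linarith
  have hσc : ∀ i : Fin d, Continuous (σ i) := by
    intro i
    refine (LipschitzWith.of_dist_le_mul (K := Real.toNNReal C) fun x y => ?_).continuous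
    rw [Real.dist_eq, Real.dist_eq, Real.coe_toNNReal _ hC.le]
    have h1 := hlip i x y
    have h2 := abs_nonneg (b i x - b i y)
    linarith
  -- kernel bounds
  have hKbound : ∀ K0 : ℝ → Fin d → ℝ, IsMKernel d T K0 →
      ∀ s ∈ Set.Icc (0:ℝ) T, ∀ i : Fin d, 0 ≤ K0 s i ∧ K0 s i ≤ 1 := by
    intro K0 hK0 s hs i
    obtain ⟨hnn, hsum⟩ := hK0.2 s hs
    exact ⟨hnn i, by
      calc K0 s i ≤ ∑ i' : Fin d, K0 s i' :=
        Finset.single_le_sum (fun i' _ => hnn i') (Finset.mem_univ i)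
      _ = 1 := hsum⟩
  -- step data
  obtain ⟨k, t, cs, hmono, ht0, htT, hc0, hpiece⟩ := lam.2
  have htmem : ∀ j : Fin (k+2), t j ∈ Set.Icc (0:ℝ) T := fun j =>
    ⟨ht0 ▸ hmono.monotone (Fin.zero_le j), htT ▸ hmono.monotone (Fin.le_last j)⟩
  have htsub : ∀ j : Fin (k+1), Set.Icc (t j.castSucc) (t j.succ) ⊆ Set.Icc (0:ℝ) T :=
    fun j => Set.Icc_subset_Icc (htmem _).1 (htmem _).2
  have htle : ∀ j : Fin (k+1), t j.castSucc ≤ t j.succ :=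
    fun j => (hmono (Fin.castSucc_lt_succ : j.castSucc < j.succ)).le
  set W : ℝ := ∑ j : Fin (k+1), (|cs j| + (cs j) ^ 2 / 2) with hWdef
  have hW0 : 0 ≤ W := Finset.sum_nonneg fun j _ => by positivity
  have hd0 : (0:ℝ) < d := by exact_mod_cast hd
  set ε0 : ℝ := ε / (2 * d * (W + 1)) with hε0def
  have hε0 : 0 < ε0 := by positivity
  -- choose δ for each pair (i, j)
  have key : ∀ p : Fin d × Fin (k+1), ∃ δp : ℝ, 0 < δp ∧
      ∀ f : ℝ → ℝ, Measurable f →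
        (∀ s ∈ Set.Icc (t p.2.castSucc) (t p.2.succ), |f s| ≤ 1) →
        (∀ r ∈ Set.Icc (t p.2.castSucc) (t p.2.succ),
          |∫ s in (t p.2.castSucc)..r, f s| ≤ δp) →
        |∫ s in (t p.2.castSucc)..(t p.2.succ), b p.1 (φ s) * f s| < ε0 ∧
        |∫ s in (t p.2.castSucc)..(t p.2.succ), (σ p.1 (φ s)) ^ 2 * f s| < ε0 := by
    intro p
    have hg1 : ContinuousOn (fun s => b p.1 (φ s))
        (Set.Icc (t p.2.castSucc) (t p.2.succ)) :=
      (hbc p.1).comp_continuousOn (hφcont.mono (htsub p.2))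
    have hg2 : ContinuousOn (fun s => (σ p.1 (φ s)) ^ 2)
        (Set.Icc (t p.2.castSucc) (t p.2.succ)) :=
      ((hσc p.1).comp_continuousOn (hφcont.mono (htsub p.2))).pow 2
    obtain ⟨δ1, hδ1, h1⟩ := core (htle p.2) hg1 hε0
    obtain ⟨δ2, hδ2, h2⟩ := core (htle p.2) hg2 hε0
    exact ⟨min δ1 δ2, lt_min hδ1 hδ2, fun f hf hfb hprim =>
      ⟨h1 f hf hfb (fun r hr => (hprim r hr).trans (min_le_left _ _)),
       h2 f hf hfb (fun r hr => (hprim r hr).trans (min_le_right _ _))⟩⟩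
  choose δp hδp hkey using key
  haveI : Nonempty (Fin d) := ⟨⟨0, hd⟩⟩
  refine ⟨(Finset.univ.inf' Finset.univ_nonempty δp) / 2, by
    have := (Finset.lt_inf'_iff (Finset.univ_nonempty (α := Fin d × Fin (k+1)))).2
      (fun p _ => hδp p)
    positivity, ?_⟩
  set δ0 : ℝ := Finset.univ.inf' Finset.univ_nonempty δp with hδ0def
  intro μ K' hK' hμ hdist
  -- the difference kernel
  have hfmeas : ∀ i : Fin d, Measurable fun s => K' s i - K s i :=
    fun i => (hK'.1 i).sub (hK.1 i)
  have hfbd : ∀ i : Fin d, ∀ s ∈ Set.Icc (0:ℝ) T, |K' s i - K s i| ≤ 1 := by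
    intro i s hs
    obtain ⟨u1, u2⟩ := hKbound K hK s hs i
    obtain ⟨v1, v2⟩ := hKbound K' hK' s hs i
    rw [abs_le]; constructor <;> linarith
  -- primitive bound
  have hprim : ∀ i : Fin d, ∀ y (hy : y ∈ Set.Icc (0:ℝ) T),
      |∫ s in (0:ℝ)..y, (K' s i - K s i)| ≤ dist μ ν := by
    intro i y hy
    have hKi : IntervalIntegrable (fun s => K s i) volume 0 y :=
      auxF (M := 1) hy.1 (hK.1 i) (fun s hs => by
        obtain ⟨u1, u2⟩ := hKbound K hK s ⟨hs.1, hs.2.trans hy.2⟩ i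
        rw [abs_le]; constructor <;> linarith)
    have hK'i : IntervalIntegrable (fun s => K' s i) volume 0 y :=
      auxF (M := 1) hy.1 (hK'.1 i) (fun s hs => by
        obtain ⟨u1, u2⟩ := hKbound K' hK' s ⟨hs.1, hs.2.trans hy.2⟩ i
        rw [abs_le]; constructor <;> linarith)
    have hval : ∫ s in (0:ℝ)..y, (K' s i - K s i)
        = μ ⟨y, hy⟩ i - ν ⟨y, hy⟩ i := by
      rw [intervalIntegral.integral_sub hK'i hKi, hμ ⟨y, hy⟩ i, hν ⟨y, hy⟩ i]
    rw [hval, ← Real.dist_eq]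
    exact (dist_le_pi_dist (μ ⟨y, hy⟩) (ν ⟨y, hy⟩) i).trans
      (ContinuousMap.dist_apply_le_dist _)
  -- the per-piece estimates
  have hest : ∀ p : Fin d × Fin (k+1),
      |∫ s in (t p.2.castSucc)..(t p.2.succ),
        b p.1 (φ s) * (K' s p.1 - K s p.1)| < ε0 ∧
      |∫ s in (t p.2.castSucc)..(t p.2.succ),
        (σ p.1 (φ s)) ^ 2 * (K' s p.1 - K s p.1)| < ε0 := by
    intro p
    refine hkey p _ (hfmeas p.1) (fun s hs => hfbd p.1 s (htsub p.2 hs)) ?_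
    intro r hr
    have hr' : r ∈ Set.Icc (0:ℝ) T := htsub p.2 hr
    have ha' : t p.2.castSucc ∈ Set.Icc (0:ℝ) T := htmem _
    have hfi : ∀ y ∈ Set.Icc (0:ℝ) T,
        IntervalIntegrable (fun s => K' s p.1 - K s p.1) volume 0 y := fun y hy =>
      auxF hy.1 (hfmeas p.1) (fun s hs => hfbd p.1 s ⟨hs.1, hs.2.trans hy.2⟩)
    have hsplit : ∫ s in (t p.2.castSucc)..r, (K' s p.1 - K s p.1)
        = (∫ s in (0:ℝ)..r, (K' s p.1 - K s p.1))
          - ∫ s in (0:ℝ)..(t p.2.castSucc), (K' s p.1 - K s p.1) :=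
      (intervalIntegral.integral_interval_sub_left (hfi r hr') (hfi _ ha')).symm
    rw [hsplit]
    have h1 := hprim p.1 r hr'
    have h2 := hprim p.1 _ ha'
    have h3 : dist μ ν < δ0 / 2 := hdist
    have h4 : δ0 ≤ δp p := Finset.inf'_le _ (Finset.mem_univ p)
    calc |(∫ s in (0:ℝ)..r, (K' s p.1 - K s p.1))
          - ∫ s in (0:ℝ)..(t p.2.castSucc), (K' s p.1 - K s p.1)|
        ≤ |∫ s in (0:ℝ)..r, (K' s p.1 - K s p.1)|
          + |∫ s in (0:ℝ)..(t p.2.castSucc), (K' s p.1 - K s p.1)| := abs_sub _ _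
    _ ≤ δp p := by linarith
  -- representation of the two kernel-dependent integrals
  have hbint : ∀ (K0 : ℝ → Fin d → ℝ), IsMKernel d T K0 →
      IntegrableOn (fun s => ∑ i : Fin d, b i (φ s) * K0 s i) (Set.Ioc 0 T) := by
    intro K0 hK0
    refine integrable_finset_sum _ fun i _ => ?_
    exact auxGF hT.le ((hbc i).comp_continuousOn hφcont) (hK0.1 i)
      (fun s hs => (abs_le.2 ⟨by linarith [(hKbound K0 hK0 s hs i).1],
        (hKbound K0 hK0 s hs i).2⟩))
  have hsint : ∀ (K0 : ℝ → Fin d → ℝ), IsMKernel d T K0 →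
      IntegrableOn (fun s => ∑ i : Fin d, (σ i (φ s)) ^ 2 * K0 s i) (Set.Ioc 0 T) := by
    intro K0 hK0
    refine integrable_finset_sum _ fun i _ => ?_
    exact auxGF hT.le (((hσc i).comp_continuousOn hφcont).pow 2) (hK0.1 i)
      (fun s hs => (abs_le.2 ⟨by linarith [(hKbound K0 hK0 s hs i).1],
        (hKbound K0 hK0 s hs i).2⟩))
  have hpiece2 : ∀ j : Fin (k+1), ∀ s : ℝ, t j.castSucc < s → s ≤ t j.succ →
      (lam.1 s) ^ 2 / 2 = (cs j) ^ 2 / 2 := fun j s h1 h2 => by rw [hpiece j s h1 h2]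
  have hrepQ : ∀ (K0 : ℝ → Fin d → ℝ), IsMKernel d T K0 →
      ∫ s in (0:ℝ)..T, lam.1 s * ∑ i : Fin d, b i (φ s) * K0 s i
        = ∑ j : Fin (k+1), cs j *
            ∫ s in (t j.castSucc)..(t j.succ), ∑ i : Fin d, b i (φ s) * K0 s i :=
    fun K0 hK0 => step_repr hmono ht0 htT hpiece (hbint K0 hK0)
  have hrepR : ∀ (K0 : ℝ → Fin d → ℝ), IsMKernel d T K0 →
      ∫ s in (0:ℝ)..T, (lam.1 s) ^ 2 / 2 * ∑ i : Fin d, (σ i (φ s)) ^ 2 * K0 s i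
        = ∑ j : Fin (k+1), (cs j) ^ 2 / 2 *
            ∫ s in (t j.castSucc)..(t j.succ), ∑ i : Fin d, (σ i (φ s)) ^ 2 * K0 s i :=
    fun K0 hK0 => step_repr (lam := fun s => (lam.1 s) ^ 2 / 2) hmono ht0 htT hpiece2
      (hsint K0 hK0)
  -- per-piece integrability
  have hbpint : ∀ (K0 : ℝ → Fin d → ℝ), IsMKernel d T K0 → ∀ j : Fin (k+1), ∀ i : Fin d,
      IntervalIntegrable (fun s => b i (φ s) * K0 s i) volume (t j.castSucc) (t j.succ) := by
    intro K0 hK0 j i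
    exact auxGF' (htle j) ((hbc i).comp_continuousOn (hφcont.mono (htsub j))) (hK0.1 i)
      (fun s hs => abs_le.2 ⟨by linarith [(hKbound K0 hK0 s (htsub j hs) i).1],
        (hKbound K0 hK0 s (htsub j hs) i).2⟩)
  have hspint : ∀ (K0 : ℝ → Fin d → ℝ), IsMKernel d T K0 → ∀ j : Fin (k+1), ∀ i : Fin d,
      IntervalIntegrable (fun s => (σ i (φ s)) ^ 2 * K0 s i) volume (t j.castSucc) (t j.succ) := by
    intro K0 hK0 j i
    exact auxGF' (htle j) (((hσc i).comp_continuousOn (hφcont.mono (htsub j))).pow 2) (hK0.1 i)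
      (fun s hs => abs_le.2 ⟨by linarith [(hKbound K0 hK0 s (htsub j hs) i).1],
        (hKbound K0 hK0 s (htsub j hs) i).2⟩)
  -- difference of the Q-terms
  have hQdiff : ∀ j : Fin (k+1),
      (∫ s in (t j.castSucc)..(t j.succ), ∑ i : Fin d, b i (φ s) * K' s i)
        - (∫ s in (t j.castSucc)..(t j.succ), ∑ i : Fin d, b i (φ s) * K s i)
      = ∑ i : Fin d, ∫ s in (t j.castSucc)..(t j.succ), b i (φ s) * (K' s i - K s i) := by
    intro j
    rw [intervalIntegral.integral_finset_sum (fun i _ => hbpint K' hK' j i),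
      intervalIntegral.integral_finset_sum (fun i _ => hbpint K hK j i),
      ← Finset.sum_sub_distrib]
    refine Finset.sum_congr rfl fun i _ => ?_
    rw [← intervalIntegral.integral_sub (hbpint K' hK' j i) (hbpint K hK j i)]
    simp only [mul_sub]
  have hRdiff : ∀ j : Fin (k+1),
      (∫ s in (t j.castSucc)..(t j.succ), ∑ i : Fin d, (σ i (φ s)) ^ 2 * K' s i)
        - (∫ s in (t j.castSucc)..(t j.succ), ∑ i : Fin d, (σ i (φ s)) ^ 2 * K s i)
      = ∑ i : Fin d, ∫ s in (t j.castSucc)..(t j.succ), (σ i (φ s)) ^ 2 * (K' s i - K s i) := by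
    intro j
    rw [intervalIntegral.integral_finset_sum (fun i _ => hspint K' hK' j i),
      intervalIntegral.integral_finset_sum (fun i _ => hspint K hK j i),
      ← Finset.sum_sub_distrib]
    refine Finset.sum_congr rfl fun i _ => ?_
    rw [← intervalIntegral.integral_sub (hspint K' hK' j i) (hspint K hK j i)]
    simp only [mul_sub]
  -- final estimate
  have hmain : |Flam d T b σ φ φd lam.1 K - Flam d T b σ φ φd lam.1 K'| ≤ ε / 2 := by
    have hexp : Flam d T b σ φ φd lam.1 K - Flam d T b σ φ φd lam.1 K'
        = (∑ j : Fin (k+1), cs j *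
            (∑ i : Fin d, ∫ s in (t j.castSucc)..(t j.succ), b i (φ s) * (K' s i - K s i)))
          + ∑ j : Fin (k+1), (cs j) ^ 2 / 2 *
            (∑ i : Fin d, ∫ s in (t j.castSucc)..(t j.succ), (σ i (φ s)) ^ 2 * (K' s i - K s i)) := by
      simp only [Flam]
      rw [hrepQ K hK, hrepQ K' hK', hrepR K hK, hrepR K' hK']
      have hQ : (∑ j : Fin (k+1), cs j *
            ∫ s in (t j.castSucc)..(t j.succ), ∑ i : Fin d, b i (φ s) * K' s i)
          - (∑ j : Fin (k+1), cs j *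
            ∫ s in (t j.castSucc)..(t j.succ), ∑ i : Fin d, b i (φ s) * K s i)
          = ∑ j : Fin (k+1), cs j * (∑ i : Fin d,
              ∫ s in (t j.castSucc)..(t j.succ), b i (φ s) * (K' s i - K s i)) := by
        rw [← Finset.sum_sub_distrib]
        exact Finset.sum_congr rfl fun j _ => by rw [← mul_sub, hQdiff j]
      have hR : (∑ j : Fin (k+1), (cs j) ^ 2 / 2 *
            ∫ s in (t j.castSucc)..(t j.succ), ∑ i : Fin d, (σ i (φ s)) ^ 2 * K' s i)
          - (∑ j : Fin (k+1), (cs j) ^ 2 / 2 *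
            ∫ s in (t j.castSucc)..(t j.succ), ∑ i : Fin d, (σ i (φ s)) ^ 2 * K s i)
          = ∑ j : Fin (k+1), (cs j) ^ 2 / 2 * (∑ i : Fin d,
              ∫ s in (t j.castSucc)..(t j.succ), (σ i (φ s)) ^ 2 * (K' s i - K s i)) := by
        rw [← Finset.sum_sub_distrib]
        exact Finset.sum_congr rfl fun j _ => by rw [← mul_sub, hRdiff j]
      linarith [hQ, hR]
    rw [hexp]
    have hb1 : ∀ j : Fin (k+1),
        |∑ i : Fin d, ∫ s in (t j.castSucc)..(t j.succ), b i (φ s) * (K' s i - K s i)|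
          ≤ d * ε0 := by
      intro j
      calc |∑ i : Fin d, ∫ s in (t j.castSucc)..(t j.succ), b i (φ s) * (K' s i - K s i)|
          ≤ ∑ i : Fin d, |∫ s in (t j.castSucc)..(t j.succ), b i (φ s) * (K' s i - K s i)| :=
            Finset.abs_sum_le_sum_abs _ _
      _ ≤ ∑ _i : Fin d, ε0 := Finset.sum_le_sum fun i _ => (hest (i, j)).1.le
      _ = d * ε0 := by rw [Finset.sum_const, Finset.card_univ, Fintype.card_fin, nsmul_eq_mul]
    have hb2 : ∀ j : Fin (k+1),
        |∑ i : Fin d, ∫ s in (t j.castSucc)..(t j.succ), (σ i (φ s)) ^ 2 * (K' s i - K s i)|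
          ≤ d * ε0 := by
      intro j
      calc |∑ i : Fin d, ∫ s in (t j.castSucc)..(t j.succ), (σ i (φ s)) ^ 2 * (K' s i - K s i)|
          ≤ ∑ i : Fin d, |∫ s in (t j.castSucc)..(t j.succ), (σ i (φ s)) ^ 2 * (K' s i - K s i)| :=
            Finset.abs_sum_le_sum_abs _ _
      _ ≤ ∑ _i : Fin d, ε0 := Finset.sum_le_sum fun i _ => (hest (i, j)).2.le
      _ = d * ε0 := by rw [Finset.sum_const, Finset.card_univ, Fintype.card_fin, nsmul_eq_mul]
    have step1 : |∑ j : Fin (k+1), cs j *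
          (∑ i : Fin d, ∫ s in (t j.castSucc)..(t j.succ), b i (φ s) * (K' s i - K s i))|
        ≤ ∑ j : Fin (k+1), |cs j| * (d * ε0) := by
      refine (Finset.abs_sum_le_sum_abs _ _).trans (Finset.sum_le_sum fun j _ => ?_)
      rw [abs_mul]
      exact mul_le_mul_of_nonneg_left (hb1 j) (abs_nonneg _)
    have step2 : |∑ j : Fin (k+1), (cs j) ^ 2 / 2 *
          (∑ i : Fin d, ∫ s in (t j.castSucc)..(t j.succ), (σ i (φ s)) ^ 2 * (K' s i - K s i))|
        ≤ ∑ j : Fin (k+1), (cs j) ^ 2 / 2 * (d * ε0) := by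
      refine (Finset.abs_sum_le_sum_abs _ _).trans (Finset.sum_le_sum fun j _ => ?_)
      rw [abs_mul, abs_of_nonneg (by positivity : (0:ℝ) ≤ (cs j) ^ 2 / 2)]
      exact mul_le_mul_of_nonneg_left (hb2 j) (by positivity)
    have htotal : ∑ j : Fin (k+1), |cs j| * (d * ε0)
        + ∑ j : Fin (k+1), (cs j) ^ 2 / 2 * (d * ε0) = W * (d * ε0) := by
      rw [hWdef, ← Finset.sum_add_distrib, Finset.sum_mul]
      exact Finset.sum_congr rfl fun j _ => by ring
    have hfinal : W * (d * ε0) ≤ ε / 2 := by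
      have hdne : (d:ℝ) ≠ 0 := ne_of_gt hd0
      have hWne : W + 1 ≠ 0 := by linarith
      rw [hε0def, show W * ((d:ℝ) * (ε / (2 * d * (W + 1)))) = ε * W / (2 * (W + 1)) from by
        field_simp]
      rw [div_le_div_iff₀ (by linarith) (by norm_num : (0:ℝ) < 2)]
      nlinarith
    calc |_ + _| ≤ _ + _ := abs_add_le _ _
    _ ≤ ∑ j : Fin (k+1), |cs j| * (d * ε0) + ∑ j : Fin (k+1), (cs j) ^ 2 / 2 * (d * ε0) :=
        add_le_add step1 step2
    _ = W * (d * ε0) := htotal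
    _ ≤ ε / 2 := hfinal
  -- conclude
  have hxF' : x < Flam d T b σ φ φd lam.1 K' := by
    have := abs_le.1 hmain
    simp only [hεdef] at hε ⊢
    linarith [this.2]
  calc c < z := hcz
  _ = (x : EReal) := hzx
  _ < ((Flam d T b σ φ φd lam.1 K' : ℝ) : EReal) := by exact_mod_cast hxF'
  _ ≤ Lambda d T b σ φ φd K' :=
      le_iSup (fun l : {lam : ℝ → ℝ // IsStepFun T lam} =>
        ((Flam d T b σ φ φd l.1 K' : ℝ) : EReal)) lam
end
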